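/- arXiv:2312.12950 — 3 statements merged into one kernel-verified Lean document; each statement's English description precedes it below -/
import Mathlib

section
/- Let d, k be natural numbers with k ≥ 3, and let t : ℕ → ℕ be a function (with t r = 0 for r < 2 and for r ≥ d + k). Set f₀ = ∑_{r≥2} t r and f₁ = ∑_{r≥2} r · t r. If 3 - 2d - 2k + f₁ - f₀ > 0 and 5k + t 2 + t 3 ≥ d + ∑_{r≥5} (r-4) · t r, then 3·(9 - 8k - 5d + 3f₁ - 4f₀) < 8·(3 - 2d - 2k + f₁ - f₀), i.e. the characteristic number (9 - 8k - 5d + 3f₁ - 4f₀)/(3 - 2d - 2k + f₁ - f₀) is strictly less than 8/3. -/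
theorem charn_bound (d k : ℕ) (hk : 3 ≤ k) (t : ℕ → ℕ)
    (ht2 : ∀ r < 2, t r = 0) (htop : ∀ r, d + k ≤ r → t r = 0)
    (f0 f1 S : ℤ)
    (hf0 : f0 = ∑ r ∈ Finset.range (d + k), (t r : ℤ))
    (hf1 : f1 = ∑ r ∈ Finset.range (d + k), (r : ℤ) * (t r : ℤ))
    (hS : S = ∑ r ∈ Finset.Ico 5 (d + k), ((r : ℤ) - 4) * (t r : ℤ))
    (hc2 : 0 < 3 - 2 * (d : ℤ) - 2 * (k : ℤ) + f1 - f0)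
    (hHir : 5 * (k : ℤ) + (t 2 : ℤ) + (t 3 : ℤ) ≥ (d : ℤ) + S) :
    3 * (9 - 8 * (k : ℤ) - 5 * (d : ℤ) + 3 * f1 - 4 * f0) <
      8 * (3 - 2 * (d : ℤ) - 2 * (k : ℤ) + f1 - f0) := by
  have h0 := ht2 0 (by norm_num)
  have h1 := ht2 1 (by norm_num)
  set n := d + k with hn
  have hvan : ∀ r ∈ Finset.range (n + 5), r ∉ Finset.range n →
      ((r : ℤ) - 4) * (t r : ℤ) = 0 := by
    intro r _ hr
    have : n ≤ r := by simpa using hr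
    simp [htop r this]
  have hext : ∑ r ∈ Finset.range n, ((r : ℤ) - 4) * (t r : ℤ) =
      ∑ r ∈ Finset.range (n + 5), ((r : ℤ) - 4) * (t r : ℤ) :=
    Finset.sum_subset (Finset.range_subset_range.2 (by omega)) hvan
  have hSext : S = ∑ r ∈ Finset.Ico 5 (n + 5), ((r : ℤ) - 4) * (t r : ℤ) := by
    rw [hS]
    refine Finset.sum_subset (Finset.Ico_subset_Ico_right (by omega)) ?_
    intro r hr hr'
    simp only [Finset.mem_Ico] at hr hr'
    have : n ≤ r := by omega
    simp [htop r this]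
  have hsplit : ∑ r ∈ Finset.range (n + 5), ((r : ℤ) - 4) * (t r : ℤ) =
      (∑ r ∈ Finset.range 5, ((r : ℤ) - 4) * (t r : ℤ)) +
        ∑ r ∈ Finset.Ico 5 (n + 5), ((r : ℤ) - 4) * (t r : ℤ) := by
    rw [Finset.range_eq_Ico]
    exact (Finset.sum_Ico_consecutive _ (show 0 ≤ 5 by omega) (show 5 ≤ n + 5 by omega)).symm
  have hsmall : ∑ r ∈ Finset.range 5, ((r : ℤ) - 4) * (t r : ℤ) =
      -2 * (t 2 : ℤ) - (t 3 : ℤ) := by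
    simp [Finset.sum_range_succ, h0, h1]
    ring
  have key : f1 - 4 * f0 = -2 * (t 2 : ℤ) - (t 3 : ℤ) + S := by
    rw [hf0, hf1, Finset.mul_sum, ← Finset.sum_sub_distrib]
    have : ∑ r ∈ Finset.range n, ((r : ℤ) * (t r : ℤ) - 4 * (t r : ℤ)) =
        ∑ r ∈ Finset.range n, ((r : ℤ) - 4) * (t r : ℤ) := by
      apply Finset.sum_congr rfl; intro r _; ring
    rw [this, hext, hsplit, hsmall, hSext]
  linarith
end

section
/- Let k ≥ 3 be a natural number and let t : ℕ → ℕ satisfy t r = 0 for r < 2 and for r ≥ k. Set f₀ = ∑_{r} t r, f₁ = ∑_{r} r · t r, f₂ = ∑_{r} r² · t r, and assume the combinatorial identity f₂ - f₁ = 4k² - 4k (every pair of the k conics meets in 4 points). Assume also that 3 - 2k + f₁ - f₀ > 0. Then (9 - 8k + 3f₁ - 4f₀) · (2k² - 4k + 3) ≥ (4k² - 12k + 9) · (3 - 2k + f₁ - f₀). -/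
theorem conic_lower_bound (k : ℕ) (hk : 3 ≤ k) (t : ℕ → ℕ)
    (ht2 : ∀ r < 2, t r = 0) (htop : ∀ r, k ≤ r → t r = 0)
    (f0 f1 f2 : ℤ)
    (hf0 : f0 = ∑ r ∈ Finset.range k, (t r : ℤ))
    (hf1 : f1 = ∑ r ∈ Finset.range k, (r : ℤ) * (t r : ℤ))
    (hf2 : f2 = ∑ r ∈ Finset.range k, (r : ℤ) ^ 2 * (t r : ℤ))
    (hcomb : f2 - f1 = 4 * (k : ℤ) ^ 2 - 4 * (k : ℤ))
    (hc2 : 0 < 3 - 2 * (k : ℤ) + f1 - f0) :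
    (9 - 8 * (k : ℤ) + 3 * f1 - 4 * f0) * (2 * (k : ℤ) ^ 2 - 4 * (k : ℤ) + 3) ≥
      (4 * (k : ℤ) ^ 2 - 12 * (k : ℤ) + 9) * (3 - 2 * (k : ℤ) + f1 - f0) := by
  have hS : (0:ℤ) ≤ ∑ r ∈ Finset.range k,
      (2 * (k:ℤ) * ((r:ℤ) - 2) * ((k:ℤ) - 1 - (r:ℤ))) * (t r : ℤ) := by
    apply Finset.sum_nonneg
    intro r hr
    rcases lt_or_ge r 2 with h2 | h2
    · simp [ht2 r h2]
    · have hrk : r ≤ k - 1 := Nat.le_pred_of_lt (Finset.mem_range.mp hr)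
      have h1 : (0:ℤ) ≤ (r:ℤ) - 2 := by
        have := (Nat.cast_le (α := ℤ)).mpr h2; push_cast at this ⊢; linarith
      have h3 : (0:ℤ) ≤ (k:ℤ) - 1 - (r:ℤ) := by
        have hk1 : r + 1 ≤ k := Finset.mem_range.mp hr
        have := (Nat.cast_le (α := ℤ)).mpr hk1; push_cast at this; linarith
      have h4 : (0:ℤ) ≤ (k:ℤ) := Nat.cast_nonneg k
      positivity
  have hT : (0:ℤ) ≤ ∑ r ∈ Finset.range k,
      (((r:ℤ) - 2) * ((r:ℤ) + 1)) * (t r : ℤ) := by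
    apply Finset.sum_nonneg
    intro r hr
    rcases lt_or_ge r 2 with h2 | h2
    · simp [ht2 r h2]
    · have h1 : (0:ℤ) ≤ (r:ℤ) - 2 := by
        have := (Nat.cast_le (α := ℤ)).mpr h2; push_cast at this ⊢; linarith
      have h5 : (0:ℤ) ≤ (r:ℤ) + 1 := by positivity
      positivity
  have eS : ∑ r ∈ Finset.range k,
      (2 * (k:ℤ) * ((r:ℤ) - 2) * ((k:ℤ) - 1 - (r:ℤ))) * (t r : ℤ)
      = 2 * (k:ℤ) * ((k:ℤ) + 1) * f1 - 2 * (k:ℤ) * f2 - 4 * (k:ℤ) * ((k:ℤ) - 1) * f0 := by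
    rw [hf0, hf1, hf2, Finset.mul_sum, Finset.mul_sum, Finset.mul_sum,
      ← Finset.sum_sub_distrib, ← Finset.sum_sub_distrib]
    exact Finset.sum_congr rfl fun r _ => by ring
  have eT : ∑ r ∈ Finset.range k,
      (((r:ℤ) - 2) * ((r:ℤ) + 1)) * (t r : ℤ) = f2 - f1 - 2 * f0 := by
    rw [hf0, hf1, hf2, Finset.mul_sum, ← Finset.sum_sub_distrib, ← Finset.sum_sub_distrib]
    exact Finset.sum_congr rfl fun r _ => by ring
  rw [eS] at hS
  rw [eT] at hT
  nlinarith [hS, hT, hcomb]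
end

section
/- Let k ≥ 3 and let t : ℕ → ℕ be finitely supported with t r = 0 unless 2 ≤ r ≤ k - 1, satisfying ∑_r r(r-1) t r = 4k(k-1). Set f₀ = ∑ t r, f₁ = ∑ r t r, f₂ = ∑ r² t r. Then -8k³ + 14k² - 6k + 2k²f₁ + (-4k² + 4k - 3)f₀ ≥ 0 (inequality of rationals/integers scaled by 2: i.e. -16k³ + 28k² - 12k + 4k²f₁ + (-8k² + 8k - 6)f₀ ≥ 0). -/
theorem main_combinatorial_inequality (k : ℕ) (hk : 3 ≤ k) (t : ℕ → ℕ)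
    (hsupp : ∀ r, ¬ (2 ≤ r ∧ r ≤ k - 1) → t r = 0)
    (hcomb : ∑ r ∈ Finset.range k, (r : ℤ) * ((r : ℤ) - 1) * (t r : ℤ) =
      4 * (k : ℤ) * ((k : ℤ) - 1))
    (f0 f1 : ℤ)
    (hf0 : f0 = ∑ r ∈ Finset.range k, (t r : ℤ))
    (hf1 : f1 = ∑ r ∈ Finset.range k, (r : ℤ) * (t r : ℤ)) :
    0 ≤ -16 * (k : ℤ) ^ 3 + 28 * (k : ℤ) ^ 2 - 12 * (k : ℤ) + 4 * (k : ℤ) ^ 2 * f1 +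
        (-8 * (k : ℤ) ^ 2 + 8 * (k : ℤ) - 6) * f0 := by
  have hsum : (0:ℤ) ≤ ∑ r ∈ Finset.range k,
      (((3-4*(k:ℤ)) * (r:ℤ) * ((r:ℤ)-1) + 4*(k:ℤ)^2*(r:ℤ)
        + (-8*(k:ℤ)^2 + 8*(k:ℤ) - 6)) * (t r : ℤ)) := by
    apply Finset.sum_nonneg
    intro r _
    by_cases h : 2 ≤ r ∧ r ≤ k - 1
    · have hr2 : (2:ℤ) ≤ (r:ℤ) := by exact_mod_cast h.1
      have hrk : (r:ℤ) ≤ (k:ℤ) - 1 := by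
        have : r ≤ k - 1 := h.2
        omega
      have hk' : (3:ℤ) ≤ (k:ℤ) := by exact_mod_cast hk
      have ht : (0:ℤ) ≤ (t r : ℤ) := Int.natCast_nonneg _
      have hg : (0:ℤ) ≤ (3-4*(k:ℤ)) * (r:ℤ) * ((r:ℤ)-1) + 4*(k:ℤ)^2*(r:ℤ)
          + (-8*(k:ℤ)^2 + 8*(k:ℤ) - 6) := by
        have hid : (3-4*(k:ℤ)) * (r:ℤ) * ((r:ℤ)-1) + 4*(k:ℤ)^2*(r:ℤ)
            + (-8*(k:ℤ)^2 + 8*(k:ℤ) - 6)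
            = ((r:ℤ)-2) * (4*((k:ℤ)-(r:ℤ))*((k:ℤ)-1) - (r:ℤ) + 3) := by ring
        rw [hid]
        have h1 : (0:ℤ) ≤ (r:ℤ) - 2 := by linarith
        have h2 : (0:ℤ) ≤ 4*((k:ℤ)-(r:ℤ))*((k:ℤ)-1) - (r:ℤ) + 3 := by
          nlinarith [mul_nonneg (by linarith : (0:ℤ) ≤ (k:ℤ)-1-(r:ℤ))
            (by linarith : (0:ℤ) ≤ (k:ℤ)-1)]
        exact mul_nonneg h1 h2
      exact mul_nonneg hg ht
    · rw [hsupp r h]; simp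
  have h2 : ∑ r ∈ Finset.range k,
      (((3-4*(k:ℤ)) * (r:ℤ) * ((r:ℤ)-1) + 4*(k:ℤ)^2*(r:ℤ)
        + (-8*(k:ℤ)^2 + 8*(k:ℤ) - 6)) * (t r : ℤ))
      = (3-4*(k:ℤ)) * (∑ r ∈ Finset.range k, (r:ℤ) * ((r:ℤ)-1) * (t r : ℤ))
        + 4*(k:ℤ)^2 * f1 + (-8*(k:ℤ)^2 + 8*(k:ℤ) - 6) * f0 := by
    rw [hf0, hf1, Finset.mul_sum, Finset.mul_sum, Finset.mul_sum,
      ← Finset.sum_add_distrib, ← Finset.sum_add_distrib]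
    exact Finset.sum_congr rfl fun r _ => by ring
  rw [hcomb] at h2
  have he : (3-4*(k:ℤ)) * (4*(k:ℤ) * ((k:ℤ)-1))
      = -16*(k:ℤ)^3 + 28*(k:ℤ)^2 - 12*(k:ℤ) := by ring
  rw [h2, he] at hsum
  linarith
end
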